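/- arXiv:1208.1822 — 2 statements merged into one kernel-verified Lean document; each statement's English description precedes it below -/
import Mathlib

section
/- Let k be a positive integer and I a squarefree monomial ideal of S = K[x_1,…,x_n]. If J is another squarefree monomial ideal of S generated by monomials of degrees ≥ k, then sdepth_n(I) ≥ k if and only if sdepth_n(I + J) ≥ k. -/
noncomputable section

open MvPolynomial

/-- The total degree of an exponent vector. -/
def edeg {n : ℕ} (a : Fin n →₀ ℕ) : ℕ := ∑ i, a i

/-- An exponent vector is squarefree if every exponent is at most 1. -/
def IsSqfree {n : ℕ} (a : Fin n →₀ ℕ) : Prop := ∀ i, a i ≤ 1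

/-- The set of exponent vectors of monomials belonging to the ideal `I`. -/
def expSet {K : Type} [Field K] {n : ℕ} (I : Ideal (MvPolynomial (Fin n) K)) :
    Set (Fin n →₀ ℕ) := {a | (monomial a (1 : K)) ∈ I}

/-- `I` is generated by monomials `x^a` with `a` satisfying the predicate `P`. -/
def GenBy {K : Type} [Field K] {n : ℕ} (I : Ideal (MvPolynomial (Fin n) K))
    (P : (Fin n →₀ ℕ) → Prop) : Prop :=
  ∃ G : Set (Fin n →₀ ℕ), (∀ a ∈ G, P a) ∧
    I = Ideal.span ((fun a => (monomial a (1 : K))) '' G)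

/-- `I` is a monomial ideal. -/
def IsMonomialIdeal {K : Type} [Field K] {n : ℕ} (I : Ideal (MvPolynomial (Fin n) K)) : Prop :=
  GenBy I fun _ => True

/-- `I` is a squarefree monomial ideal. -/
def IsSqfreeMonomialIdeal {K : Type} [Field K] {n : ℕ}
    (I : Ideal (MvPolynomial (Fin n) K)) : Prop := GenBy I IsSqfree

/-- `x^a >_lex x^b` in the lexicographic order with `x_1 > x_2 > ⋯ > x_n`. -/
def lexGT {n : ℕ} (a b : Fin n →₀ ℕ) : Prop :=
  ∃ i : Fin n, (∀ j : Fin n, j < i → a j = b j) ∧ b i < a i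

/-- `I` is a lexsegment ideal. -/
def IsLexsegment {K : Type} [Field K] {n : ℕ} (I : Ideal (MvPolynomial (Fin n) K)) : Prop :=
  IsMonomialIdeal I ∧ ∀ a b : Fin n →₀ ℕ, (monomial a (1 : K)) ∈ I → edeg b = edeg a →
    lexGT b a → (monomial b (1 : K)) ∈ I

/-- `I` is a squarefree lexsegment ideal. -/
def IsSqfreeLexsegment {K : Type} [Field K] {n : ℕ}
    (I : Ideal (MvPolynomial (Fin n) K)) : Prop :=
  IsSqfreeMonomialIdeal I ∧ ∀ a b : Fin n →₀ ℕ, IsSqfree a → IsSqfree b →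
    (monomial a (1 : K)) ∈ I → edeg b = edeg a → lexGT b a → (monomial b (1 : K)) ∈ I

/-- The minimal number of generators of an ideal. -/
def mu {K : Type} [Field K] {n : ℕ} (I : Ideal (MvPolynomial (Fin n) K)) : ℕ :=
  sInf {m | ∃ G : Finset (MvPolynomial (Fin n) K), G.card = m ∧ I = Ideal.span (G : Set _)}

/-- `ξ_k = ∑_{j=1}^k C(2j-1, j)`. -/
def xi (k : ℕ) : ℕ := ∑ j ∈ Finset.Icc 1 k, (2 * j - 1).choose j

/-- The Hilbert function of `I`: the `K`-dimension of the degree-`j` component of `I`. -/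
def hilb {K : Type} [Field K] {n : ℕ} (I : Ideal (MvPolynomial (Fin n) K)) (j : ℕ) : ℕ :=
  Module.finrank K ↥((Submodule.restrictScalars K I) ⊓ homogeneousSubmodule (Fin n) K j)

/-- The Hilbert function of `I` extended to all integer degrees. -/
def hilbZ {K : Type} [Field K] {n : ℕ} (I : Ideal (MvPolynomial (Fin n) K)) (j : ℤ) : ℕ :=
  if 0 ≤ j then hilb I j.toNat else 0

/-- The Hilbert function of a standard graded polynomial ring in `d` variables,
at degree `t ∈ ℤ`. -/
def polyHilb (d : ℕ) (t : ℤ) : ℕ :=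
  if t < 0 then 0 else if d = 0 then (if t = 0 then 1 else 0) else (t.toNat + (d - 1)).choose (d - 1)

/-- A (standard graded) Hilbert decomposition of `I` all of whose retracts are polynomial
rings in at least `k` variables: `I ≅ ⊕ᵢ Sᵢ(-sᵢ)` as graded `K`-vector spaces, where `Sᵢ`
is a graded algebra retract of `S`, i.e. a polynomial ring in `dd i ≥ k` variables. -/
def HilbertDecomp1 {K : Type} [Field K] {n : ℕ} (I : Ideal (MvPolynomial (Fin n) K))
    (k : ℕ) : Prop :=
  ∃ (ι : Type) (_ : Fintype ι) (dd : ι → ℕ) (s : ι → ℤ),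
    (∀ i, k ≤ dd i) ∧ ∀ j : ℤ, hilbZ I j = ∑ i, polyHilb (dd i) (j - s i)

/-- The Hilbert depth of `I` in the standard graded sense. -/
def hdepth1 {K : Type} [Field K] {n : ℕ} (I : Ideal (MvPolynomial (Fin n) K)) : ℕ∞ :=
  sSup {k : ℕ∞ | ∃ m : ℕ, HilbertDecomp1 I m ∧ k = m}

/-- The set of exponent vectors `u + ℕ^Z`, corresponding to the Stanley space `x^u K[Z]`. -/
def cone {n : ℕ} (u : Fin n →₀ ℕ) (Z : Finset (Fin n)) : Set (Fin n →₀ ℕ) :=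
  {a | (∀ j, u j ≤ a j) ∧ ∀ j ∉ Z, a j = u j}

/-- A Stanley decomposition, with all Stanley spaces of dimension at least `k`, of the
`ℤⁿ`-graded module whose monomial basis has exponent set `A`. -/
def StanleyPartN {n : ℕ} (A : Set (Fin n →₀ ℕ)) (k : ℕ) : Prop :=
  ∃ (ι : Type) (_ : Fintype ι) (u : ι → (Fin n →₀ ℕ)) (Z : ι → Finset (Fin n)),
    (∀ i, k ≤ (Z i).card) ∧ (∀ i, cone (u i) (Z i) ⊆ A) ∧
    (∀ a ∈ A, ∃! i, a ∈ cone (u i) (Z i))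

/-- The multigraded Stanley depth of the `ℤⁿ`-graded module whose monomial basis has
exponent set `A`. -/
def sdepthN {n : ℕ} (A : Set (Fin n →₀ ℕ)) : ℕ∞ :=
  sSup {k : ℕ∞ | ∃ m : ℕ, StanleyPartN A m ∧ k = m}

/-- A multigraded Hilbert decomposition of the monomial ideal `I`, with all retracts
polynomial rings in at least `k` variables: the multigraded Hilbert function of `I`
(which takes values 0 and 1) equals the sum of the multigraded Hilbert functions of
the shifted retracts `x^{u i} K[Z i]`. -/
def HilbertDecompN {K : Type} [Field K] {n : ℕ} (I : Ideal (MvPolynomial (Fin n) K))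
    (k : ℕ) : Prop :=
  ∃ (ι : Type) (_ : Fintype ι) (u : ι → (Fin n →₀ ℕ)) (Z : ι → Finset (Fin n)),
    (∀ i, k ≤ (Z i).card) ∧
    (∀ a : Fin n →₀ ℕ, (a ∈ expSet I ↔ ∃ i, a ∈ cone (u i) (Z i)) ∧
      (∀ i i', a ∈ cone (u i) (Z i) → a ∈ cone (u i') (Z i') → i = i'))

/-- The multigraded Hilbert depth of a monomial ideal `I`. -/
def hdepthN {K : Type} [Field K] {n : ℕ} (I : Ideal (MvPolynomial (Fin n) K)) : ℕ∞ :=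
  sSup {k : ℕ∞ | ∃ m : ℕ, HilbertDecompN I m ∧ k = m}

/-- The graded maximal ideal `(x_1, …, x_n)`. -/
def maxIdeal (K : Type) [Field K] (n : ℕ) : Ideal (MvPolynomial (Fin n) K) :=
  Ideal.span (Set.range X)

/-- The depth of a module `M` over `S = K[x_1,…,x_n]` with respect to the graded maximal
ideal: the supremum of lengths of `M`-regular sequences in `(x_1,…,x_n)`. -/
def mdepth (K : Type) [Field K] (n : ℕ) (M : Type)
    [AddCommGroup M] [Module (MvPolynomial (Fin n) K) M] : ℕ∞ :=
  sSup {k : ℕ∞ | ∃ rs : List (MvPolynomial (Fin n) K),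
    (∀ r ∈ rs, r ∈ maxIdeal K n) ∧ RingTheory.Sequence.IsRegular M rs ∧ k = rs.length}

/-- The quotient module `I/J` for ideals `J ≤ I`. -/
def quotMod {K : Type} [Field K] {n : ℕ} (I J : Ideal (MvPolynomial (Fin n) K)) : Type :=
  ↥I ⧸ (Submodule.comap (Submodule.subtype I) J)

instance {K : Type} [Field K] {n : ℕ} (I J : Ideal (MvPolynomial (Fin n) K)) :
    AddCommGroup (quotMod I J) := by unfold quotMod; infer_instance

instance {K : Type} [Field K] {n : ℕ} (I J : Ideal (MvPolynomial (Fin n) K)) :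
    Module (MvPolynomial (Fin n) K) (quotMod I J) := by unfold quotMod; infer_instance

/-- `ρ_j(I\J)`: the number of squarefree monomials of degree `j` in `I ∖ J`. -/
def rho {K : Type} [Field K] {n : ℕ} (I J : Ideal (MvPolynomial (Fin n) K)) (j : ℕ) : ℕ :=
  Set.ncard {a : Fin n →₀ ℕ | IsSqfree a ∧ edeg a = j ∧ a ∈ expSet I ∧ a ∉ expSet J}

/-- `ρ_j(I)`: the number of squarefree monomials of degree `j` in `I`. -/
def rhoI {K : Type} [Field K] {n : ℕ} (I : Ideal (MvPolynomial (Fin n) K)) (j : ℕ) : ℕ :=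
  Set.ncard {a : Fin n →₀ ℕ | IsSqfree a ∧ edeg a = j ∧ a ∈ expSet I}

/-- `I` is a stable monomial ideal. Here `j` plays the role of `m(u)`, the largest index of
a variable dividing `u = x^a`. -/
def IsStable {K : Type} [Field K] {n : ℕ} (I : Ideal (MvPolynomial (Fin n) K)) : Prop :=
  IsMonomialIdeal I ∧ ∀ a : Fin n →₀ ℕ, (monomial a (1 : K)) ∈ I →
    ∀ j : Fin n, a j ≠ 0 → (∀ l, j < l → a l = 0) → ∀ i, i < j →
      (monomial (a + Finsupp.single i 1 - Finsupp.single j 1) (1 : K)) ∈ I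

/-- `I` is a squarefree stable monomial ideal. -/
def IsSqfreeStable {K : Type} [Field K] {n : ℕ} (I : Ideal (MvPolynomial (Fin n) K)) : Prop :=
  IsSqfreeMonomialIdeal I ∧ ∀ a : Fin n →₀ ℕ, IsSqfree a → (monomial a (1 : K)) ∈ I →
    ∀ j : Fin n, a j ≠ 0 → (∀ l, j < l → a l = 0) → ∀ i, i < j → a i = 0 →
      (monomial (a + Finsupp.single i 1 - Finsupp.single j 1) (1 : K)) ∈ I

/-- `I` is a squarefree strongly stable monomial ideal. -/
def IsSqfreeStronglyStable {K : Type} [Field K] {n : ℕ}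
    (I : Ideal (MvPolynomial (Fin n) K)) : Prop :=
  IsSqfreeMonomialIdeal I ∧ ∀ a : Fin n →₀ ℕ, IsSqfree a → (monomial a (1 : K)) ∈ I →
    ∀ i : Fin n, a i ≠ 0 → ∀ j, j < i → a j = 0 →
      (monomial (a + Finsupp.single j 1 - Finsupp.single i 1) (1 : K)) ∈ I

/-- The exponent vectors of the minimal monomial generators of a monomial ideal:
the monomials of `I` minimal with respect to divisibility. -/
def minGens {K : Type} [Field K] {n : ℕ} (I : Ideal (MvPolynomial (Fin n) K)) :
    Set (Fin n →₀ ℕ) := {a | a ∈ expSet I ∧ ∀ b ∈ expSet I, b ≤ a → b = a}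

/-- `m(u)`: the largest index (1-based) of a variable dividing `x^a`; `0` if `a = 0`. -/
def mvar {n : ℕ} (a : Fin n →₀ ℕ) : ℕ := a.support.sup (fun i => (i : ℕ) + 1)

/-- `m(I) = max { m(u) : u ∈ G(I) }`. -/
def mIdeal {K : Type} [Field K] {n : ℕ} (I : Ideal (MvPolynomial (Fin n) K)) : ℕ :=
  sSup {m | ∃ a ∈ minGens I, m = mvar a}

open MvPolynomial

/-- The `K`-subspace `Aᵢ·xᵢ` of `S`, where `Aᵢ` is the subalgebra generated by `B`. -/
def stSpace {K : Type} [Field K] {n : ℕ} (B : Finset (MvPolynomial (Fin n) K))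
    (x : MvPolynomial (Fin n) K) : Submodule K (MvPolynomial (Fin n) K) :=
  (Subalgebra.toSubmodule (Algebra.adjoin K (B : Set (MvPolynomial (Fin n) K)))).map
    (LinearMap.mulLeft K x)

/-- A standard graded Stanley decomposition of the ideal `I` with all Stanley spaces of
depth at least `k`: a finite family of graded algebra retracts `Sᵢ = K[Bᵢ]` (generated by
`k ≤ |Bᵢ|` linearly independent linear forms) and homogeneous elements `xᵢ ∈ I` with
`Sᵢ ∩ ann(xᵢ) = 0`, such that `I = ⊕ᵢ Sᵢ xᵢ` as graded `K`-vector spaces. -/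
def StanleyDecomp1 {K : Type} [Field K] {n : ℕ} (I : Ideal (MvPolynomial (Fin n) K))
    (k : ℕ) : Prop :=
  ∃ (ι : Type) (_ : Fintype ι) (B : ι → Finset (MvPolynomial (Fin n) K))
    (x : ι → MvPolynomial (Fin n) K) (d : ι → ℕ),
      (∀ i, ∀ b ∈ B i, b ∈ homogeneousSubmodule (Fin n) K 1) ∧
      (∀ i, LinearIndependent K (fun b : (B i : Set (MvPolynomial (Fin n) K)) =>
        (b : MvPolynomial (Fin n) K))) ∧
      (∀ i, k ≤ (B i).card) ∧
      (∀ i, x i ∈ I) ∧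
      (∀ i, x i ∈ homogeneousSubmodule (Fin n) K (d i)) ∧
      (∀ i, ∀ a ∈ Algebra.adjoin K ((B i : Set (MvPolynomial (Fin n) K))),
        a * x i = 0 → a = 0) ∧
      (iSup (fun i => stSpace (B i) (x i)) = Submodule.restrictScalars K I) ∧
      (iSupIndep fun i => stSpace (B i) (x i))

/-- The standard graded Stanley depth of `I`. -/
def sdepth1 {K : Type} [Field K] {n : ℕ} (I : Ideal (MvPolynomial (Fin n) K)) : ℕ∞ :=
  sSup {k : ℕ∞ | ∃ m : ℕ, StanleyDecomp1 I m ∧ k = m}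

/-- The subspace `S₁ · V` of `S`. -/
def mulS1 {K : Type} [Field K] {n : ℕ} (V : Submodule K (MvPolynomial (Fin n) K)) :
    Submodule K (MvPolynomial (Fin n) K) :=
  Submodule.span K {p | ∃ l ∈ homogeneousSubmodule (Fin n) K 1, ∃ v ∈ V, p = l * v}

/-- A lexsegment set of monomials of degree `d`. -/
def IsLexSet {n : ℕ} (d : ℕ) (L : Set (Fin n →₀ ℕ)) : Prop :=
  (∀ a ∈ L, edeg a = d) ∧ ∀ a ∈ L, ∀ b : Fin n →₀ ℕ, edeg b = d → lexGT b a → b ∈ L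

/-- `V ⊆ S_d` is a Gotzmann space: `dim_K (S₁·V) = dim_K (S₁·lex(V))`, where `lex(V)` is
spanned by the lexsegment set of monomials of degree `d` of cardinality `dim_K V`. -/
def IsGotzmannSpace {K : Type} [Field K] {n : ℕ} (d : ℕ)
    (V : Submodule K (MvPolynomial (Fin n) K)) : Prop :=
  ∃ L : Finset (Fin n →₀ ℕ), IsLexSet (n := n) d (L : Set (Fin n →₀ ℕ)) ∧ L.card = Module.finrank K ↥V ∧
    Module.finrank K ↥(mulS1 V) =
      Module.finrank K ↥(mulS1 (Submodule.span K
        ((fun a => (monomial a (1 : K))) '' (L : Set (Fin n →₀ ℕ)))))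

/-- `I` is a homogeneous ideal in the standard grading. -/
def IsHomogeneousIdeal {K : Type} [Field K] {n : ℕ}
    (I : Ideal (MvPolynomial (Fin n) K)) : Prop :=
  ∀ p ∈ I, ∀ k : ℕ, homogeneousComponent k p ∈ I

/-- `I` is a Gotzmann ideal: each homogeneous component `I_k` is a Gotzmann space. -/
def IsGotzmannIdeal {K : Type} [Field K] {n : ℕ}
    (I : Ideal (MvPolynomial (Fin n) K)) : Prop :=
  IsHomogeneousIdeal I ∧ ∀ k : ℕ,
    IsGotzmannSpace k ((Submodule.restrictScalars K I) ⊓ homogeneousSubmodule (Fin n) K k)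

/-- `I` is generated by homogeneous elements of degree `d`. -/
def GenInDegHomog {K : Type} [Field K] {n : ℕ} (I : Ideal (MvPolynomial (Fin n) K))
    (d : ℕ) : Prop :=
  ∃ G : Set (MvPolynomial (Fin n) K), (∀ g ∈ G, g ∈ homogeneousSubmodule (Fin n) K d) ∧
    I = Ideal.span G


namespace SdepthAux


open Finset

variable {n : ℕ}

/-- The 0/1 indicator exponent vector of a finset. -/
def chi (S : Finset (Fin n)) : Fin n →₀ ℕ := Finsupp.indicator S (fun _ _ => 1)

lemma chi_apply_mem {S : Finset (Fin n)} {i : Fin n} (h : i ∈ S) : chi S i = 1 :=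
  Finsupp.indicator_of_mem h _

lemma chi_apply_notMem {S : Finset (Fin n)} {i : Fin n} (h : i ∉ S) : chi S i = 0 :=
  Finsupp.indicator_of_notMem h _

lemma chi_support (S : Finset (Fin n)) : (chi S).support = S := by
  ext i
  rw [Finsupp.mem_support_iff]
  constructor
  · intro h; by_contra hi; exact h (chi_apply_notMem hi)
  · intro h; rw [chi_apply_mem h]; exact one_ne_zero

lemma chi_sqfree (S : Finset (Fin n)) : IsSqfree (chi S) := by
  intro i
  by_cases h : i ∈ S
  · rw [chi_apply_mem h]
  · rw [chi_apply_notMem h]; exact zero_le_one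

/-- An interval partition of a family `F` of subsets of `Fin n`, with tops' cardinalities
satisfying `pr`. -/
def IPart (F : Set (Finset (Fin n))) (pr : ℕ → Prop)
    (P : Finset (Finset (Fin n) × Finset (Fin n))) : Prop :=
  (∀ p ∈ P, p.1 ⊆ p.2 ∧ pr p.2.card ∧ ∀ T : Finset (Fin n), p.1 ⊆ T → T ⊆ p.2 → T ∈ F) ∧
  (∀ S ∈ F, ∃! p : Finset (Fin n) × Finset (Fin n), p ∈ P ∧ p.1 ⊆ S ∧ S ⊆ p.2)

lemma ipart_weaken {F : Set (Finset (Fin n))} {pr pr' : ℕ → Prop}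
    {P : Finset (Finset (Fin n) × Finset (Fin n))} (h : IPart F pr P)
    (hpr : ∀ m, pr m → pr' m) : IPart F pr' P :=
  ⟨fun p hp => ⟨(h.1 p hp).1, hpr _ (h.1 p hp).2.1, (h.1 p hp).2.2⟩, h.2⟩

/-- Partition of a truncated Boolean lattice into intervals with tops of size exactly `m`. -/
lemma trunc_part (X : Finset (Fin n)) : ∀ m : ℕ, m ≤ X.card →
    ∃ P, IPart {T | T ⊆ X ∧ T.card ≤ m} (· = m) P := by
  classical
  induction X using Finset.cons_induction with
  | empty =>
    intro m hm
    have hm0 : m = 0 := Nat.le_zero.mp hm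
    subst hm0
    refine ⟨{(∅, ∅)}, ?_, ?_⟩
    · intro p hp
      rw [Finset.mem_singleton] at hp
      subst hp
      refine ⟨subset_rfl, by simp, ?_⟩
      intro T h1 h2
      have : T = ∅ := Finset.subset_empty.mp h2
      subst this; exact ⟨subset_rfl, le_rfl⟩
    · intro S hS
      have hS0 : S = ∅ := Finset.card_eq_zero.mp (Nat.le_zero.mp hS.2)
      subst hS0
      exact ⟨(∅, ∅), ⟨Finset.mem_singleton_self _, subset_rfl, subset_rfl⟩,
        fun q hq => Finset.mem_singleton.mp hq.1⟩
  | cons a X ha ih =>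
    intro m hm
    rw [Finset.card_cons] at hm
    rcases Nat.lt_or_ge m (X.card + 1) with hlt | hge
    · -- m ≤ X.card
      have hmX : m ≤ X.card := Nat.lt_succ_iff.mp hlt
      rcases Nat.eq_zero_or_pos m with hm0 | hmpos
      · subst hm0
        refine ⟨{(∅, ∅)}, ?_, ?_⟩
        · intro p hp
          rw [Finset.mem_singleton] at hp
          subst hp
          refine ⟨subset_rfl, by simp, ?_⟩
          intro T h1 h2
          have : T = ∅ := Finset.subset_empty.mp h2
          subst this; exact ⟨Finset.empty_subset _, le_rfl⟩
        · intro S hS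
          have hS0 : S = ∅ := Finset.card_eq_zero.mp (Nat.le_zero.mp hS.2)
          subst hS0
          exact ⟨(∅, ∅), ⟨Finset.mem_singleton_self _, subset_rfl, subset_rfl⟩,
            fun q hq => Finset.mem_singleton.mp hq.1⟩
      · -- 0 < m ≤ X.card
        obtain ⟨P₁, hP₁⟩ := ih m hmX
        obtain ⟨P₂, hP₂⟩ := ih (m - 1) (le_trans (Nat.sub_le m 1) hmX)
        -- every top of P₂ avoids a
        have hP₂X : ∀ p ∈ P₂, p.2 ⊆ X := by
          intro p hp
          have := (hP₂.1 p hp).2.2 p.2 (hP₂.1 p hp).1 subset_rfl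
          exact this.1
        have hP₁X : ∀ p ∈ P₁, p.2 ⊆ X := by
          intro p hp
          have := (hP₁.1 p hp).2.2 p.2 (hP₁.1 p hp).1 subset_rfl
          exact this.1
        refine ⟨P₁ ∪ P₂.image (fun p => (insert a p.1, insert a p.2)), ?_, ?_⟩
        · intro p hp
          rw [Finset.mem_union] at hp
          rcases hp with hp | hp
          · obtain ⟨hsub, hcard, hint⟩ := hP₁.1 p hp
            refine ⟨hsub, hcard, ?_⟩
            intro T h1 h2
            obtain ⟨hTX, hTc⟩ := hint T h1 h2
            exact ⟨hTX.trans (Finset.subset_cons ha), hTc⟩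
          · obtain ⟨q, hq, hpq⟩ := Finset.mem_image.mp hp
            obtain ⟨hsub, hcard, hint⟩ := hP₂.1 q hq
            have haq2 : a ∉ q.2 := fun h => ha (hP₂X q hq h)
            have haq1 : a ∉ q.1 := fun h => haq2 (hsub h)
            subst hpq
            refine ⟨Finset.insert_subset_insert _ hsub, ?_, ?_⟩
            · simp only [Finset.card_insert_of_notMem haq2, hcard]
              omega
            · intro T h1 h2
              have haT : a ∈ T := h1 (Finset.mem_insert_self _ _)
              have h1' : q.1 ⊆ T.erase a := by
                intro x hx
                exact Finset.mem_erase.mpr ⟨fun hxa => haq1 (hxa ▸ hx),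
                  h1 (Finset.mem_insert_of_mem hx)⟩
              have h2' : T.erase a ⊆ q.2 := by
                intro x hx
                rcases Finset.mem_insert.mp (h2 (Finset.mem_erase.mp hx).2) with h | h
                · exact absurd h (Finset.mem_erase.mp hx).1
                · exact h
              obtain ⟨hTX, hTc⟩ := hint _ h1' h2'
              constructor
              · intro x hx
                rcases eq_or_ne x a with rfl | hxa
                · exact Finset.mem_cons_self _ _
                · exact Finset.mem_cons_of_mem (hTX (Finset.mem_erase.mpr ⟨hxa, hx⟩))
              · have := Finset.card_erase_of_mem haT
                omega
        · intro S hS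
          obtain ⟨hSX, hSc⟩ := hS
          by_cases haS : a ∈ S
          · -- use lifted pair
            have hSX' : S.erase a ⊆ X := by
              intro x hx
              rcases Finset.mem_cons.mp (hSX (Finset.mem_erase.mp hx).2) with h | h
              · exact absurd h (Finset.mem_erase.mp hx).1
              · exact h
            have hSc' : (S.erase a).card ≤ m - 1 := by
              have := Finset.card_erase_of_mem haS
              omega
            obtain ⟨q, ⟨hq, hq1, hq2⟩, huq⟩ := hP₂.2 (S.erase a) ⟨hSX', hSc'⟩
            have haq2 : a ∉ q.2 := fun h => ha (hP₂X q hq h)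
            refine ⟨(insert a q.1, insert a q.2), ⟨Finset.mem_union_right _
              (Finset.mem_image_of_mem _ hq), ?_, ?_⟩, ?_⟩
            · exact Finset.insert_subset haS (hq1.trans (Finset.erase_subset _ _))
            · intro x hx
              rcases eq_or_ne x a with rfl | hxa
              · exact Finset.mem_insert_self _ _
              · exact Finset.mem_insert_of_mem (hq2 (Finset.mem_erase.mpr ⟨hxa, hx⟩))
            · rintro r ⟨hr, hr1, hr2⟩
              rw [Finset.mem_union] at hr
              rcases hr with hr | hr
              · -- impossible: S ⊆ r.2 ⊆ X but a ∈ S, a ∉ X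
                exact absurd (hP₁X r hr (hr2 haS)) ha
              · obtain ⟨q', hq', hq'eq⟩ := Finset.mem_image.mp hr
                have haq'2 : a ∉ q'.2 := fun h => ha (hP₂X q' hq' h)
                have haq'1 : a ∉ q'.1 := fun h => haq'2 ((hP₂.1 q' hq').1 h)
                have hq'1 : q'.1 ⊆ S.erase a := by
                  intro x hx
                  refine Finset.mem_erase.mpr ⟨fun hxa => haq'1 (hxa ▸ hx), ?_⟩
                  have : x ∈ r.1 := hq'eq ▸ Finset.mem_insert_of_mem hx
                  exact hr1 this
                have hq'2 : S.erase a ⊆ q'.2 := by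
                  intro x hx
                  have : x ∈ r.2 := hr2 (Finset.mem_erase.mp hx).2
                  rw [← hq'eq] at this
                  rcases Finset.mem_insert.mp this with h | h
                  · exact absurd h (Finset.mem_erase.mp hx).1
                  · exact h
                have : q' = q := huq q' ⟨hq', hq'1, hq'2⟩
                rw [← hq'eq, this]
          · -- a ∉ S : use P₁
            have hSX' : S ⊆ X := by
              intro x hx
              rcases Finset.mem_cons.mp (hSX hx) with h | h
              · exact absurd (h ▸ hx) haS
              · exact h
            obtain ⟨q, ⟨hq, hq1, hq2⟩, huq⟩ := hP₁.2 S ⟨hSX', hSc⟩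
            refine ⟨q, ⟨Finset.mem_union_left _ hq, hq1, hq2⟩, ?_⟩
            rintro r ⟨hr, hr1, hr2⟩
            rw [Finset.mem_union] at hr
            rcases hr with hr | hr
            · exact huq r ⟨hr, hr1, hr2⟩
            · obtain ⟨q', hq', hq'eq⟩ := Finset.mem_image.mp hr
              have : a ∈ r.1 := hq'eq ▸ Finset.mem_insert_self _ _
              exact absurd (hr1 this) haS
    · -- m = X.card + 1 : single interval
      have hmeq : m = X.card + 1 := le_antisymm hm hge
      refine ⟨{(∅, Finset.cons a X ha)}, ?_, ?_⟩
      · intro p hp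
        rw [Finset.mem_singleton] at hp
        subst hp
        refine ⟨Finset.empty_subset _, by simp [Finset.card_insert_of_notMem ha, hmeq], ?_⟩
        intro T h1 h2
        exact ⟨h2, le_trans (Finset.card_le_card h2) (by simp [Finset.card_insert_of_notMem ha, hmeq])⟩
      · intro S hS
        exact ⟨(∅, Finset.cons a X ha), ⟨Finset.mem_singleton_self _,
          Finset.empty_subset _, hS.1⟩, fun q hq => Finset.mem_singleton.mp hq.1⟩





lemma ipart_union_singletons {F : Set (Finset (Fin n))} {pr : ℕ → Prop}
    {P : Finset (Finset (Fin n) × Finset (Fin n))} (h : IPart F pr P)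
    (D : Set (Finset (Fin n))) (hD : ∀ S ∈ D, pr S.card) (hd : ∀ S ∈ D, S ∉ F) :
    ∃ Q, IPart (F ∪ D) pr Q := by
  classical
  have hDfin : D.Finite := Set.toFinite D
  refine ⟨P ∪ hDfin.toFinset.image (fun S => (S, S)), ?_, ?_⟩
  · intro p hp
    rw [Finset.mem_union] at hp
    rcases hp with hp | hp
    · obtain ⟨h1, h2, h3⟩ := h.1 p hp
      exact ⟨h1, h2, fun T hT1 hT2 => Or.inl (h3 T hT1 hT2)⟩
    · obtain ⟨S, hS, rfl⟩ := Finset.mem_image.mp hp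
      rw [Set.Finite.mem_toFinset] at hS
      refine ⟨subset_rfl, hD S hS, ?_⟩
      intro T hT1 hT2
      have : T = S := Finset.Subset.antisymm hT2 hT1
      exact Or.inr (this ▸ hS)
  · intro S hS
    rcases hS with hS | hS
    · obtain ⟨p, ⟨hp, hp1, hp2⟩, hup⟩ := h.2 S hS
      refine ⟨p, ⟨Finset.mem_union_left _ hp, hp1, hp2⟩, ?_⟩
      rintro q ⟨hq, hq1, hq2⟩
      rw [Finset.mem_union] at hq
      rcases hq with hq | hq
      · exact hup q ⟨hq, hq1, hq2⟩
      · obtain ⟨T, hT, rfl⟩ := Finset.mem_image.mp hq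
        rw [Set.Finite.mem_toFinset] at hT
        have : S = T := Finset.Subset.antisymm hq2 hq1
        exact absurd hS (this ▸ hd T hT)
    · have hSF : S ∉ F := hd S hS
      refine ⟨(S, S), ⟨Finset.mem_union_right _ (Finset.mem_image_of_mem _
        (Set.Finite.mem_toFinset hDfin |>.mpr hS)), subset_rfl, subset_rfl⟩, ?_⟩
      rintro q ⟨hq, hq1, hq2⟩
      rw [Finset.mem_union] at hq
      rcases hq with hq | hq
      · exact absurd ((h.1 q hq).2.2 S hq1 hq2) hSF
      · obtain ⟨T, hT, rfl⟩ := Finset.mem_image.mp hq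
        have : S = T := Finset.Subset.antisymm hq2 hq1
        rw [this]



variable {n : ℕ}

/-- The truncation of a family at cardinality `k`. -/
def Fle (F : Set (Finset (Fin n))) (k : ℕ) : Set (Finset (Fin n)) :=
  {S | S ∈ F ∧ S.card ≤ k}

lemma claim1 (F : Set (Finset (Fin n))) (k : ℕ) :
    (∃ P, IPart F (k ≤ ·) P) ↔ (∃ P, IPart (Fle F k) (· = k) P) := by
  classical
  constructor
  · rintro ⟨P, hP⟩
    -- choice of truncated-cube partitions
    have hch : ∀ p : Finset (Fin n) × Finset (Fin n), ∃ Q,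
        (k - p.1.card) ≤ (p.2 \ p.1).card →
        IPart {T | T ⊆ p.2 \ p.1 ∧ T.card ≤ k - p.1.card} (· = (k - p.1.card)) Q := by
      intro p
      by_cases hc : (k - p.1.card) ≤ (p.2 \ p.1).card
      · obtain ⟨Q, hQ⟩ := trunc_part (p.2 \ p.1) (k - p.1.card) hc
        exact ⟨Q, fun _ => hQ⟩
      · exact ⟨∅, fun h => absurd h hc⟩
    choose Qf hQf using hch
    refine ⟨(P.filter (fun p => p.1.card ≤ k)).biUnion
      (fun p => (Qf p).image (fun q => (p.1 ∪ q.1, p.1 ∪ q.2))), ?_, ?_⟩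
    all_goals {
      have key : ∀ p ∈ P, p.1.card ≤ k →
          IPart {T | T ⊆ p.2 \ p.1 ∧ T.card ≤ k - p.1.card} (· = (k - p.1.card)) (Qf p) := by
        intro p hp hpc
        obtain ⟨hsub, hcard, _⟩ := hP.1 p hp
        refine hQf p ?_
        rw [Finset.card_sdiff_of_subset hsub]
        omega
      first
      | · -- validity
          intro r hr
          obtain ⟨p, hpf, hrq⟩ := Finset.mem_biUnion.mp hr
          rw [Finset.mem_filter] at hpf
          obtain ⟨hp, hpc⟩ := hpf
          obtain ⟨q, hq, rfl⟩ := Finset.mem_image.mp hrq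
          obtain ⟨hsub, hcard, hint⟩ := hP.1 p hp
          have hqv := (key p hp hpc).1 q hq
          have hq2sub : q.2 ⊆ p.2 \ p.1 := (hqv.2.2 q.2 hqv.1 subset_rfl).1
          have hq2card : q.2.card = k - p.1.card := hqv.2.1
          have hdisj : Disjoint p.1 q.2 :=
            Finset.disjoint_left.mpr (fun x hx hx2 =>
              (Finset.mem_sdiff.mp (hq2sub hx2)).2 hx)
          refine ⟨Finset.union_subset_union subset_rfl hqv.1, ?_, ?_⟩
          · rw [Finset.card_union_of_disjoint hdisj, hq2card]
            omega
          · intro T hT1 hT2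
            have hp1T : p.1 ⊆ T := (Finset.union_subset_iff.mp hT1).1
            have hTp2 : T ⊆ p.2 := by
              refine hT2.trans (Finset.union_subset hsub ?_)
              exact hq2sub.trans (Finset.sdiff_subset)
            refine ⟨hint T hp1T hTp2, ?_⟩
            calc T.card ≤ (p.1 ∪ q.2).card := Finset.card_le_card hT2
              _ = k := by rw [Finset.card_union_of_disjoint hdisj, hq2card]; omega
      | · -- coverage
          intro S hS
          obtain ⟨hSF, hSc⟩ := hS
          obtain ⟨p, ⟨hp, hp1, hp2⟩, hup⟩ := hP.2 S hSF
          have hpc : p.1.card ≤ k := le_trans (Finset.card_le_card hp1) hSc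
          have hkey := key p hp hpc
          have hS' : S \ p.1 ∈ {T | T ⊆ p.2 \ p.1 ∧ T.card ≤ k - p.1.card} := by
            constructor
            · intro x hx
              rw [Finset.mem_sdiff] at hx ⊢
              exact ⟨hp2 hx.1, hx.2⟩
            · rw [Finset.card_sdiff_of_subset hp1]
              omega
          obtain ⟨q, ⟨hq, hq1, hq2⟩, huq⟩ := hkey.2 (S \ p.1) hS'
          have hq1S : q.1 ⊆ S \ p.1 := hq1
          refine ⟨(p.1 ∪ q.1, p.1 ∪ q.2), ⟨Finset.mem_biUnion.mpr ⟨p,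
            Finset.mem_filter.mpr ⟨hp, hpc⟩, Finset.mem_image_of_mem _ hq⟩, ?_, ?_⟩, ?_⟩
          · exact Finset.union_subset hp1 (hq1S.trans (Finset.sdiff_subset))
          · intro x hx
            by_cases hxp : x ∈ p.1
            · exact Finset.mem_union_left _ hxp
            · exact Finset.mem_union_right _ (hq2 (Finset.mem_sdiff.mpr ⟨hx, hxp⟩))
          · rintro r ⟨hr, hr1, hr2⟩
            obtain ⟨p', hpf', hrq'⟩ := Finset.mem_biUnion.mp hr
            rw [Finset.mem_filter] at hpf'
            obtain ⟨hp', hpc'⟩ := hpf'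
            obtain ⟨q', hq', rfl⟩ := Finset.mem_image.mp hrq'
            have hkey' := key p' hp' hpc'
            have hq'v := hkey'.1 q' hq'
            have hq'2sub : q'.2 ⊆ p'.2 \ p'.1 := (hq'v.2.2 q'.2 hq'v.1 subset_rfl).1
            have hq'1sub : q'.1 ⊆ p'.2 \ p'.1 := hq'v.1.trans hq'2sub
            -- p' covers S
            have hp'S : p'.1 ⊆ S := (Finset.union_subset_iff.mp hr1).1
            have hSp' : S ⊆ p'.2 := by
              refine hr2.trans (Finset.union_subset ?_ ?_)
              · exact (hP.1 p' hp').1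
              · exact hq'2sub.trans Finset.sdiff_subset
            have hpp' : p' = p := hup p' ⟨hp', hp'S, hSp'⟩
            subst hpp'
            -- q' covers S \ p.1
            have hq'1 : q'.1 ⊆ S \ p'.1 := by
              intro x hx
              rw [Finset.mem_sdiff]
              refine ⟨hr1 (Finset.mem_union_right _ hx), ?_⟩
              exact (Finset.mem_sdiff.mp (hq'1sub hx)).2
            have hq'2 : S \ p'.1 ⊆ q'.2 := by
              intro x hx
              rw [Finset.mem_sdiff] at hx
              rcases Finset.mem_union.mp (hr2 hx.1) with h | h
              · exact absurd h hx.2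
              · exact h
            have : q' = q := huq q' ⟨hq', hq'1, hq'2⟩
            rw [this]
    }
  · rintro ⟨P, hP⟩
    have hP' : IPart (Fle F k) (k ≤ ·) P :=
      ipart_weaken hP (fun m hm => le_of_eq hm.symm)
    obtain ⟨Q, hQ⟩ := ipart_union_singletons hP' {S | S ∈ F ∧ k < S.card}
      (fun S hS => le_of_lt hS.2) (fun S hS hS' => absurd hS'.2 (Nat.not_le.mpr hS.2))
    refine ⟨Q, ?_⟩
    have : Fle F k ∪ {S | S ∈ F ∧ k < S.card} = F := by
      ext S
      constructor
      · rintro (h | h) <;> exact h.1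
      · intro h
        rcases le_or_gt S.card k with hc | hc
        · exact Or.inl ⟨h, hc⟩
        · exact Or.inr ⟨h, hc⟩
    rwa [this] at hQ

/-- The combinatorial core: enlarging an up-closed family by sets of size `≥ k` does not
change the existence of an interval partition with tops of size `≥ k`. -/
lemma core {F F' : Set (Finset (Fin n))} {k : ℕ}
    (hup : ∀ S ∈ F, ∀ T : Finset (Fin n), S ⊆ T → T ∈ F)
    (hsub : F ⊆ F') (hbig : ∀ S ∈ F', S ∉ F → k ≤ S.card) :
    (∃ P, IPart F (k ≤ ·) P) ↔ (∃ P, IPart F' (k ≤ ·) P) := by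
  classical
  rw [claim1 F k, claim1 F' k]
  constructor
  · rintro ⟨P, hP⟩
    obtain ⟨Q, hQ⟩ := ipart_union_singletons hP {S | S ∈ F' ∧ S.card ≤ k ∧ S ∉ F}
      (fun S hS => le_antisymm hS.2.1 (hbig S hS.1 hS.2.2))
      (fun S hS hS' => hS.2.2 hS'.1)
    refine ⟨Q, ?_⟩
    have : Fle F k ∪ {S | S ∈ F' ∧ S.card ≤ k ∧ S ∉ F} = Fle F' k := by
      ext S
      constructor
      · rintro (h | h)
        · exact ⟨hsub h.1, h.2⟩
        · exact ⟨h.1, h.2.1⟩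
      · intro h
        by_cases hSF : S ∈ F
        · exact Or.inl ⟨hSF, h.2⟩
        · exact Or.inr ⟨h.1, h.2, hSF⟩
    rwa [this] at hQ
  · rintro ⟨P, hP⟩
    refine ⟨P.filter (fun p => p.1 ∈ F), ?_, ?_⟩
    · intro p hp
      rw [Finset.mem_filter] at hp
      obtain ⟨hp, hp1F⟩ := hp
      obtain ⟨h1, h2, h3⟩ := hP.1 p hp
      refine ⟨h1, h2, ?_⟩
      intro T hT1 hT2
      refine ⟨hup p.1 hp1F T hT1, ?_⟩
      calc T.card ≤ p.2.card := Finset.card_le_card hT2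
        _ = k := h2
    · intro S hS
      obtain ⟨p, ⟨hp, hp1, hp2⟩, hup'⟩ := hP.2 S ⟨hsub hS.1, hS.2⟩
      have hp1F : p.1 ∈ F := by
        by_contra hc
        obtain ⟨h1, h2, h3⟩ := hP.1 p hp
        have hp1mem : p.1 ∈ Fle F' k := h3 p.1 subset_rfl h1
        have : k ≤ p.1.card := hbig p.1 hp1mem.1 hc
        have hpe : p.1 = p.2 := Finset.eq_of_subset_of_card_le h1 (by omega)
        have : S = p.1 := Finset.Subset.antisymm (hpe ▸ hp2) hp1
        exact hc (this ▸ hS.1)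
      refine ⟨p, ⟨Finset.mem_filter.mpr ⟨hp, hp1F⟩, hp1, hp2⟩, ?_⟩
      rintro q ⟨hq, hq1, hq2⟩
      exact hup' q ⟨Finset.mem_filter.mp hq |>.1, hq1, hq2⟩

lemma cone_chi_mem {A B : Finset (Fin n)} (hAB : A ⊆ B) (a : Fin n →₀ ℕ) :
    a ∈ cone (chi A) B ↔ A ⊆ a.support ∧ a.support ⊆ B := by
  constructor
  · rintro ⟨h1, h2⟩
    constructor
    · intro i hi
      rw [Finsupp.mem_support_iff]
      have := h1 i
      rw [chi_apply_mem hi] at this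
      omega
    · intro i hi
      rw [Finsupp.mem_support_iff] at hi
      by_contra hiB
      have := h2 i hiB
      rw [chi_apply_notMem (fun h => hiB (hAB h))] at this
      exact hi this
  · rintro ⟨h1, h2⟩
    constructor
    · intro i
      by_cases hi : i ∈ A
      · rw [chi_apply_mem hi]
        have := h1 hi
        rw [Finsupp.mem_support_iff] at this
        omega
      · rw [chi_apply_notMem hi]
        exact Nat.zero_le _
    · intro j hj
      have hjA : j ∉ A := fun h => hj (hAB h)
      rw [chi_apply_notMem hjA]
      by_contra hne
      exact hj (h2 (Finsupp.mem_support_iff.mpr hne))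

lemma chi_mem_cone {u : Fin n →₀ ℕ} (hu : IsSqfree u) (Z : Finset (Fin n))
    (T : Finset (Fin n)) :
    chi T ∈ cone u Z ↔ u.support ⊆ T ∧ T ⊆ u.support ∪ Z := by
  constructor
  · rintro ⟨h1, h2⟩
    constructor
    · intro i hi
      rw [Finsupp.mem_support_iff] at hi
      have := h1 i
      by_contra hiT
      rw [chi_apply_notMem hiT] at this
      omega
    · intro i hi
      by_cases hiZ : i ∈ Z
      · exact Finset.mem_union_right _ hiZ
      · have := h2 i hiZ
        rw [chi_apply_mem hi] at this
        exact Finset.mem_union_left _ (Finsupp.mem_support_iff.mpr (by omega))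
  · rintro ⟨h1, h2⟩
    constructor
    · intro i
      by_cases hi : i ∈ u.support
      · have h1' : u i ≤ 1 := hu i
        rw [chi_apply_mem (h1 hi)]
        exact h1'
      · rw [Finsupp.notMem_support_iff] at hi
        rw [hi]
        exact Nat.zero_le _
    · intro j hj
      by_cases hjT : j ∈ T
      · rcases Finset.mem_union.mp (h2 hjT) with h | h
        · rw [chi_apply_mem hjT]
          rw [Finsupp.mem_support_iff] at h
          have := hu j
          omega
        · exact absurd h hj
      · rw [chi_apply_notMem hjT]
        by_contra hne
        have : j ∈ u.support := Finsupp.mem_support_iff.mpr (fun h => hne h.symm)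
        exact hjT (h1 this)

/-- Translation between multigraded Stanley decompositions of a support-determined set of
exponent vectors and interval partitions of the family of supports. -/
lemma translation {F : Set (Finset (Fin n))} {A : Set (Fin n →₀ ℕ)}
    (hA : ∀ a : Fin n →₀ ℕ, a ∈ A ↔ a.support ∈ F) (k : ℕ) :
    StanleyPartN A k ↔ ∃ P, IPart F (k ≤ ·) P := by
  classical
  constructor
  · rintro ⟨ι, hι, u, Z, hcard, hsub, huniq⟩
    refine ⟨(Finset.univ.filter (fun i => IsSqfree (u i))).image
      (fun i => ((u i).support, (u i).support ∪ Z i)), ?_, ?_⟩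
    · intro p hp
      obtain ⟨i, hi, rfl⟩ := Finset.mem_image.mp hp
      rw [Finset.mem_filter] at hi
      refine ⟨Finset.subset_union_left, ?_, ?_⟩
      · exact le_trans (hcard i) (Finset.card_le_card Finset.subset_union_right)
      · intro T hT1 hT2
        have : chi T ∈ cone (u i) (Z i) := (chi_mem_cone hi.2 _ _).mpr ⟨hT1, hT2⟩
        have := hsub i this
        rw [hA, chi_support] at this
        exact this
    · intro S hS
      have hSA : chi S ∈ A := by rw [hA, chi_support]; exact hS
      obtain ⟨i, hi, hui⟩ := huniq (chi S) hSA
      have hisq : IsSqfree (u i) := by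
        intro j
        have := hi.1 j
        have h2 : chi S j ≤ 1 := chi_sqfree S j
        omega
      have hcov := (chi_mem_cone hisq (Z i) S).mp hi
      refine ⟨((u i).support, (u i).support ∪ Z i), ⟨Finset.mem_image_of_mem _
        (Finset.mem_filter.mpr ⟨Finset.mem_univ _, hisq⟩), hcov.1, hcov.2⟩, ?_⟩
      rintro q ⟨hq, hq1, hq2⟩
      obtain ⟨i', hi', rfl⟩ := Finset.mem_image.mp hq
      rw [Finset.mem_filter] at hi'
      have : chi S ∈ cone (u i') (Z i') := (chi_mem_cone hi'.2 _ _).mpr ⟨hq1, hq2⟩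
      rw [hui i' this]
  · rintro ⟨P, hP⟩
    refine ⟨{p // p ∈ P}, inferInstance, fun p => chi p.1.1, fun p => p.1.2, ?_, ?_, ?_⟩
    · intro p
      have := (hP.1 p.1 p.2).2.1
      exact this
    · intro p a ha
      have hp := hP.1 p.1 p.2
      rw [cone_chi_mem hp.1] at ha
      rw [hA]
      exact hp.2.2 _ ha.1 ha.2
    · intro a ha
      rw [hA] at ha
      obtain ⟨p, ⟨hp, hp1, hp2⟩, hup⟩ := hP.2 a.support ha
      refine ⟨⟨p, hp⟩, (cone_chi_mem (hP.1 p hp).1 a).mpr ⟨hp1, hp2⟩, ?_⟩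
      rintro ⟨q, hq⟩ hqa
      rw [cone_chi_mem (hP.1 q hq).1 a] at hqa
      exact Subtype.ext (hup q ⟨hq, hqa.1, hqa.2⟩)

lemma stanleyPartN_mono {A : Set (Fin n →₀ ℕ)} {k m : ℕ} (h : StanleyPartN A m)
    (hkm : k ≤ m) : StanleyPartN A k := by
  obtain ⟨ι, hι, u, Z, hcard, hsub, huniq⟩ := h
  exact ⟨ι, hι, u, Z, fun i => le_trans hkm (hcard i), hsub, huniq⟩

lemma le_sdepthN_iff {A : Set (Fin n →₀ ℕ)} {k : ℕ} (hk : 0 < k) :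
    (k : ℕ∞) ≤ sdepthN A ↔ StanleyPartN A k := by
  constructor
  · intro h
    by_contra hc
    have hub : ∀ x ∈ {k : ℕ∞ | ∃ m : ℕ, StanleyPartN A m ∧ k = m}, x ≤ ((k - 1 : ℕ) : ℕ∞) := by
      rintro x ⟨m, hm, rfl⟩
      have hmk : m ≤ k - 1 := by
        by_contra hmk
        exact hc (stanleyPartN_mono hm (by omega))
      exact_mod_cast hmk
    have : sdepthN A ≤ ((k - 1 : ℕ) : ℕ∞) := sSup_le hub
    have hlt : ((k - 1 : ℕ) : ℕ∞) < (k : ℕ∞) := by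
      exact_mod_cast Nat.sub_lt hk Nat.one_pos
    exact absurd (le_trans h this) (not_le.mpr hlt)
  · intro h
    exact le_sSup ⟨k, h, rfl⟩

lemma sqfree_edeg {a : Fin n →₀ ℕ} (h : IsSqfree a) : edeg a = a.support.card := by
  unfold edeg
  rw [← Finset.sum_subset (Finset.subset_univ a.support)
    (fun x _ hx => Finsupp.notMem_support_iff.mp hx)]
  rw [Finset.card_eq_sum_ones]
  apply Finset.sum_congr rfl
  intro i hi
  have h1 := h i
  have h2 := Finsupp.mem_support_iff.mp hi
  omega

lemma sqfree_le_iff {g a : Fin n →₀ ℕ} (hg : IsSqfree g) :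
    g ≤ a ↔ g.support ⊆ a.support := by
  rw [Finsupp.le_def]
  constructor
  · intro h i hi
    rw [Finsupp.mem_support_iff] at hi ⊢
    have := h i
    omega
  · intro h i
    by_cases hi : g i = 0
    · rw [hi]; exact Nat.zero_le _
    · have h1 := hg i
      have h2 := h (Finsupp.mem_support_iff.mpr hi)
      rw [Finsupp.mem_support_iff] at h2
      omega

lemma expSet_span {K : Type} [Field K] (G : Set (Fin n →₀ ℕ)) (a : Fin n →₀ ℕ) :
    a ∈ expSet (Ideal.span ((fun b => MvPolynomial.monomial b (1:K)) '' G)) ↔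
      ∃ g ∈ G, g ≤ a := by
  unfold expSet
  rw [Set.mem_setOf_eq, MvPolynomial.mem_ideal_span_monomial_image]
  simp [MvPolynomial.support_monomial]

end SdepthAux

/-- Corollary `rem-k`. Let `k` be a positive integer and `I` a
squarefree monomial ideal of `S = K[x_1,…,x_n]`. If `J` is another squarefree monomial
ideal of `S`, generated by monomials of degrees `≥ k`, then `sdepth_n(I) ≥ k` if and only
if `sdepth_n(I + J) ≥ k`. -/
theorem sdepthN_ge_iff_add {K : Type} [Field K] {n : ℕ} (k : ℕ) (hk : 0 < k)
    (I J : Ideal (MvPolynomial (Fin n) K)) (hI : IsSqfreeMonomialIdeal I)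
    (hJ : GenBy J (fun a => IsSqfree a ∧ k ≤ edeg a)) :
    (k : ℕ∞) ≤ sdepthN (expSet I) ↔ (k : ℕ∞) ≤ sdepthN (expSet (I + J)) := by
  classical
  obtain ⟨G, hGsq, hGspan⟩ := hI
  obtain ⟨H, hHp, hHspan⟩ := hJ
  set F : Set (Finset (Fin n)) := {S | ∃ g ∈ G, g.support ⊆ S} with hF
  set F' : Set (Finset (Fin n)) := {S | ∃ g ∈ G ∪ H, g.support ⊆ S} with hF'
  have hAI : ∀ a : Fin n →₀ ℕ, a ∈ expSet I ↔ a.support ∈ F := by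
    intro a
    rw [hGspan, SdepthAux.expSet_span]
    constructor
    · rintro ⟨g, hg, hle⟩
      exact ⟨g, hg, (SdepthAux.sqfree_le_iff (hGsq g hg)).mp hle⟩
    · rintro ⟨g, hg, hle⟩
      exact ⟨g, hg, (SdepthAux.sqfree_le_iff (hGsq g hg)).mpr hle⟩
  have hIJ : I + J = Ideal.span ((fun b => monomial b (1:K)) '' (G ∪ H)) := by
    rw [Set.image_union, Ideal.span_union, ← hGspan, ← hHspan]
    exact Ideal.add_eq_sup
  have hsq' : ∀ g ∈ G ∪ H, IsSqfree g :=
    fun g hg => hg.elim (hGsq g) (fun h => (hHp g h).1)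
  have hAIJ : ∀ a : Fin n →₀ ℕ, a ∈ expSet (I + J) ↔ a.support ∈ F' := by
    intro a
    rw [hIJ, SdepthAux.expSet_span]
    constructor
    · rintro ⟨g, hg, hle⟩
      exact ⟨g, hg, (SdepthAux.sqfree_le_iff (hsq' g hg)).mp hle⟩
    · rintro ⟨g, hg, hle⟩
      exact ⟨g, hg, (SdepthAux.sqfree_le_iff (hsq' g hg)).mpr hle⟩
  rw [SdepthAux.le_sdepthN_iff hk, SdepthAux.le_sdepthN_iff hk,
    SdepthAux.translation hAI k, SdepthAux.translation hAIJ k]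
  apply SdepthAux.core
  · rintro S ⟨g, hg, h⟩ T hST
    exact ⟨g, hg, h.trans hST⟩
  · rintro S ⟨g, hg, h⟩
    exact ⟨g, Or.inl hg, h⟩
  · rintro S ⟨g, hg, h⟩ hSF
    rcases hg with hg | hg
    · exact absurd ⟨g, hg, h⟩ hSF
    · calc k ≤ edeg g := (hHp g hg).2
        _ = g.support.card := SdepthAux.sqfree_edeg (hHp g hg).1
        _ ≤ S.card := Finset.card_le_card h
end
end

section
/- Let k be a positive integer and J ⊊ I two squarefree monomial ideals of S = K[x_1,…,x_n]. Then sdepth_n(I/J) ≥ k if and only if the poset P_{I∖J} of squarefree monomials in I∖J, ordered by divisibility, admits a partition into disjoint intervals P_{I∖J} = ⊔_{i=1}^l [u_i, v_i] such that deg(v_i) ≥ k for all i. -/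
noncomputable section

open MvPolynomial

open MvPolynomial

namespace HVZ

open MvPolynomial

/-- The squarefree part of an exponent vector. -/
def sqp {n : ℕ} (a : Fin n →₀ ℕ) : Fin n →₀ ℕ :=
  Finsupp.mapRange (fun m => min m 1) (by simp) a

lemma sqp_apply {n : ℕ} (a : Fin n →₀ ℕ) (i : Fin n) : sqp a i = min (a i) 1 :=
  Finsupp.mapRange_apply

lemma sqp_sqfree {n : ℕ} (a : Fin n →₀ ℕ) : IsSqfree (sqp a) := fun i => by
  rw [sqp_apply]; exact min_le_right _ _

lemma sqp_le {n : ℕ} (a : Fin n →₀ ℕ) : sqp a ≤ a := by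
  rw [Finsupp.le_def]; intro i; rw [sqp_apply]; exact min_le_left _ _

lemma le_sqp {n : ℕ} {g a : Fin n →₀ ℕ} (hg : IsSqfree g) (h : g ≤ a) : g ≤ sqp a := by
  rw [Finsupp.le_def] at h ⊢
  intro i; rw [sqp_apply]; exact le_min (h i) (hg i)

lemma mem_expSet_mono {K : Type} [Field K] {n : ℕ} {I : Ideal (MvPolynomial (Fin n) K)}
    {b a : Fin n →₀ ℕ} (hb : b ∈ expSet I) (h : b ≤ a) : a ∈ expSet I := by
  have : (monomial a (1 : K)) = monomial (a - b) 1 * monomial b 1 := by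
    rw [monomial_mul, one_mul, tsub_add_cancel_of_le h]
  show (monomial a (1 : K)) ∈ I
  rw [this]
  exact Ideal.mul_mem_left _ _ hb

lemma sqp_mem_expSet {K : Type} [Field K] {n : ℕ} {I : Ideal (MvPolynomial (Fin n) K)}
    (hI : IsSqfreeMonomialIdeal I) {a : Fin n →₀ ℕ} (ha : a ∈ expSet I) :
    sqp a ∈ expSet I := by
  classical
  obtain ⟨G, hG, rfl⟩ := hI
  simp only [expSet, Set.mem_setOf_eq, mem_ideal_span_monomial_image] at ha ⊢
  have ha' := ha
  intro xi hxi
  rw [support_monomial] at hxi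
  simp only [if_neg (one_ne_zero : (1:K) ≠ 0), Finset.mem_singleton] at hxi
  subst hxi
  obtain ⟨g, hgG, hgle⟩ := ha' a (by
    rw [support_monomial]
    simp [if_neg (one_ne_zero : (1:K) ≠ 0)])
  exact ⟨g, hgG, le_sqp (hG g hgG) hgle⟩

/-- indicator finsupp of a finset -/
def ind {n : ℕ} (T : Finset (Fin n)) : Fin n →₀ ℕ :=
  ⟨T, fun j => if j ∈ T then 1 else 0, by intro a; by_cases h : a ∈ T <;> simp [h]⟩

lemma ind_apply {n : ℕ} (T : Finset (Fin n)) (j : Fin n) :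
    ind T j = if j ∈ T then 1 else 0 := rfl

lemma ind_support {n : ℕ} (T : Finset (Fin n)) : (ind T).support = T := rfl

lemma ind_sqfree {n : ℕ} (T : Finset (Fin n)) : IsSqfree (ind T) := fun i => by
  rw [ind_apply]; split <;> omega

lemma le_ind {n : ℕ} {u0 : Fin n →₀ ℕ} (hu : IsSqfree u0) (Z : Finset (Fin n)) :
    u0 ≤ ind (u0.support ∪ Z) := by
  rw [Finsupp.le_def]; intro j
  rw [ind_apply]
  by_cases h : u0 j = 0
  · simp [h]
  · have : j ∈ u0.support ∪ Z := Finset.mem_union_left _ (Finsupp.mem_support_iff.2 h)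
    rw [if_pos this]; exact hu j

lemma self_mem_cone {n : ℕ} (u0 : Fin n →₀ ℕ) (Z : Finset (Fin n)) : u0 ∈ cone u0 Z :=
  ⟨fun _ => le_refl _, fun _ _ => rfl⟩

lemma ind_mem_cone {n : ℕ} {u0 : Fin n →₀ ℕ} (hu : IsSqfree u0) (Z : Finset (Fin n)) :
    ind (u0.support ∪ Z) ∈ cone u0 Z := by
  refine ⟨fun j => (Finsupp.le_def.1 (le_ind hu Z)) j, fun j hj => ?_⟩
  rw [ind_apply]
  by_cases h : u0 j = 0
  · have hns : j ∉ u0.support ∪ Z := by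
      simp only [Finset.mem_union, Finsupp.mem_support_iff, not_or, not_not]
      exact ⟨h, hj⟩
    rw [if_neg hns, h]
  · rw [if_pos (Finset.mem_union_left _ (Finsupp.mem_support_iff.2 h))]
    have := hu j; omega

lemma cone_sqfree_iff {n : ℕ} {u0 : Fin n →₀ ℕ} {Z : Finset (Fin n)} (hu : IsSqfree u0)
    {a : Fin n →₀ ℕ} (ha : IsSqfree a) :
    a ∈ cone u0 Z ↔ (u0 ≤ a ∧ a ≤ ind (u0.support ∪ Z)) := by
  constructor
  · rintro ⟨h1, h2⟩
    refine ⟨Finsupp.le_def.2 h1, Finsupp.le_def.2 fun j => ?_⟩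
    rw [ind_apply]
    by_cases hz : j ∈ u0.support ∪ Z
    · rw [if_pos hz]; exact ha j
    · rw [if_neg hz]
      simp only [Finset.mem_union, Finsupp.mem_support_iff, not_or, not_not] at hz
      rw [h2 j hz.2, hz.1]
  · rintro ⟨h1, h2⟩
    rw [Finsupp.le_def] at h1 h2
    refine ⟨h1, fun j hj => ?_⟩
    have h2j := h2 j
    rw [ind_apply] at h2j
    by_cases h : u0 j = 0
    · rw [h]
      by_cases hs : j ∈ u0.support
      · exact absurd (Finsupp.mem_support_iff.1 hs) (not_not.2 h)
      · have : j ∉ u0.support ∪ Z := by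
          simp only [Finset.mem_union, not_or]; exact ⟨hs, hj⟩
        rw [if_neg this] at h2j; omega
    · have := hu j
      have := h1 j
      have hs : j ∈ u0.support ∪ Z := Finset.mem_union_left _ (Finsupp.mem_support_iff.2 h)
      rw [if_pos hs] at h2j
      omega

lemma sqp_le_of_cone {n : ℕ} {u0 v0 a : Fin n →₀ ℕ} (hu : u0 ≤ v0)
    (hc : a ∈ cone u0 v0.support) : sqp a ≤ v0 := by
  obtain ⟨h1, h2⟩ := hc
  rw [Finsupp.le_def] at hu ⊢
  intro j
  rw [sqp_apply]
  by_cases h : v0 j = 0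
  · have : a j = u0 j := h2 j (by rw [Finsupp.mem_support_iff]; exact not_not.2 h)
    have := hu j
    omega
  · have : 1 ≤ v0 j := Nat.one_le_iff_ne_zero.2 h
    omega

lemma mem_cone_of_sqp {n : ℕ} {u0 v0 a : Fin n →₀ ℕ} (h1 : u0 ≤ sqp a) (h2 : sqp a ≤ v0) :
    a ∈ cone u0 v0.support := by
  rw [Finsupp.le_def] at h1 h2
  refine ⟨fun j => le_trans (h1 j) (Finsupp.le_def.1 (sqp_le a) j), fun j hj => ?_⟩
  rw [Finsupp.notMem_support_iff] at hj
  have ha := h2 j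
  have hb := h1 j
  rw [hj] at ha
  rw [sqp_apply] at ha hb
  omega

end HVZ


/-- Lemma 2.1, after Herzog–Vladoiu–Zheng. Let `k` be a positive
integer and `J ⊊ I` two squarefree monomial ideals of `S = K[x_1,…,x_n]`. Then
`sdepth_n(I/J) ≥ k` if and only if the poset `P_{I∖J}` of squarefree monomials of `I∖J`,
ordered by divisibility, has a partition into disjoint intervals `[u_i, v_i]` with
`|v_i| ≥ k` for all `i`. -/
theorem sdepthN_ge_iff_interval_partition {K : Type} [Field K] {n : ℕ} (k : ℕ) (hk : 0 < k)
    (I J : Ideal (MvPolynomial (Fin n) K)) (hI : IsSqfreeMonomialIdeal I)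
    (hJ : IsSqfreeMonomialIdeal J) (hJI : J < I) :
    (k : ℕ∞) ≤ sdepthN (expSet I \ expSet J) ↔
      ∃ (l : ℕ) (u v : Fin l → (Fin n →₀ ℕ)),
        (∀ i, IsSqfree (u i) ∧ u i ∈ expSet I ∧ u i ∉ expSet J) ∧
        (∀ i, IsSqfree (v i) ∧ v i ∈ expSet I ∧ v i ∉ expSet J) ∧
        (∀ i, u i ≤ v i) ∧
        (∀ i, k ≤ (v i).support.card) ∧
        (∀ a : Fin n →₀ ℕ, IsSqfree a → a ∈ expSet I → a ∉ expSet J →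
          ∃! i, u i ≤ a ∧ a ≤ v i) := by
  classical
  constructor
  · intro h
    have hlt : (((k - 1 : ℕ)) : ℕ∞) < sdepthN (expSet I \ expSet J) :=
      lt_of_lt_of_le (by exact_mod_cast Nat.sub_lt hk one_pos) h
    rw [sdepthN, lt_sSup_iff] at hlt
    obtain ⟨b, ⟨m, hm, rfl⟩, hbm⟩ := hlt
    have hkm : k ≤ m := by
      have : (k - 1 : ℕ) < m := by exact_mod_cast hbm
      omega
    obtain ⟨ι, hι, u, Z, hcard, hsub, huniq⟩ := hm
    let ι' := {i : ι // IsSqfree (u i)}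
    let l := Fintype.card ι'
    let e : Fin l ≃ ι' := (Fintype.equivFin ι').symm
    refine ⟨l, fun j => u (e j).1, fun j => HVZ.ind ((u (e j).1).support ∪ Z (e j).1),
      fun j => ?_, fun j => ?_, fun j => ?_, fun j => ?_, ?_⟩
    · exact ⟨(e j).2, (hsub (e j).1 (HVZ.self_mem_cone _ _)).1,
        (hsub (e j).1 (HVZ.self_mem_cone _ _)).2⟩
    · have hmem := hsub (e j).1 (HVZ.ind_mem_cone (e j).2 (Z (e j).1))
      exact ⟨HVZ.ind_sqfree _, hmem.1, hmem.2⟩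
    · exact HVZ.le_ind (e j).2 _
    · calc k ≤ m := hkm
        _ ≤ (Z (e j).1).card := hcard _
        _ ≤ ((u (e j).1).support ∪ Z (e j).1).card :=
            Finset.card_le_card Finset.subset_union_right
        _ = (HVZ.ind ((u (e j).1).support ∪ Z (e j).1)).support.card := by
            rw [HVZ.ind_support]
    · intro a ha haI haJ
      obtain ⟨i0, hi0, hiuniq⟩ := huniq a ⟨haI, haJ⟩
      have hu0 : IsSqfree (u i0) := fun j => le_trans (hi0.1 j) (ha j)
      refine ⟨e.symm ⟨i0, hu0⟩, ?_, ?_⟩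
      · have heq : e (e.symm ⟨i0, hu0⟩) = ⟨i0, hu0⟩ := e.apply_symm_apply _
        simp only [heq]
        exact (HVZ.cone_sqfree_iff hu0 ha).1 hi0
      · rintro j ⟨hj1, hj2⟩
        have hcj : a ∈ cone (u (e j).1) (Z (e j).1) :=
          (HVZ.cone_sqfree_iff (e j).2 ha).2 ⟨hj1, hj2⟩
        have h1 : (e j).1 = i0 := hiuniq _ hcj
        have h2 : e j = ⟨i0, hu0⟩ := Subtype.ext h1
        rw [← h2, Equiv.symm_apply_apply]
  · rintro ⟨l, u, v, hu, hv, huv, hcard, hpart⟩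
    apply le_sSup
    refine ⟨k, ⟨Fin l, inferInstance, u, fun i => (v i).support, hcard, ?_, ?_⟩, rfl⟩
    · intro i a hac
      have h1 : u i ≤ HVZ.sqp a := HVZ.le_sqp (hu i).1 (Finsupp.le_def.2 hac.1)
      have h2 : HVZ.sqp a ≤ v i := HVZ.sqp_le_of_cone (huv i) hac
      have haI : a ∈ expSet I :=
        HVZ.mem_expSet_mono (hu i).2.1 (le_trans h1 (HVZ.sqp_le a))
      refine ⟨haI, fun haJ => ?_⟩
      have hsJ : HVZ.sqp a ∈ expSet J := HVZ.sqp_mem_expSet hJ haJ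
      exact (hv i).2.2 (HVZ.mem_expSet_mono hsJ h2)
    · rintro a ⟨haI, haJ⟩
      have hc1 : HVZ.sqp a ∈ expSet I := HVZ.sqp_mem_expSet hI haI
      have hc2 : HVZ.sqp a ∉ expSet J := fun hc => haJ (HVZ.mem_expSet_mono hc (HVZ.sqp_le a))
      obtain ⟨i, ⟨hi1, hi2⟩, hiu⟩ := hpart (HVZ.sqp a) (HVZ.sqp_sqfree a) hc1 hc2
      refine ⟨i, HVZ.mem_cone_of_sqp hi1 hi2, fun j hj => ?_⟩
      exact hiu j ⟨HVZ.le_sqp (hu j).1 (Finsupp.le_def.2 hj.1), HVZ.sqp_le_of_cone (huv j) hj⟩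
end
end
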